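/- Let X and Y be topological spaces with Y Hausdorff. Let M be a dense subset of X carrying a monoid structure, and for each m ∈ M let λ_m, ρ_m : X → X be continuous maps such that for all m, m' ∈ M one has λ_m(m') = m·m' and ρ_m(m') = m'·m (viewing M as a subset of X). Similarly, let N be a dense subset of Y with a monoid structure and continuous maps λ'_n, ρ'_n : Y → Y such that λ'_n(n') = n·n' and ρ'_n(n') = n'·n for all n, n' ∈ N. Let f : X → Y be a continuous map with f(M) ⊆ N whose restriction to M is a monoid homomorphism into N. Then for every m ∈ M, f ∘ λ_m = λ'_{f(m)} ∘ f and f ∘ ρ_m = ρ'_{f(m)} ∘ f. -/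
import Mathlib


/-- Morphisms of Boolean spaces with internal monoids preserve the biactions:
if `f : X → Y` is continuous, maps the dense submonoid `M` into `N` restricting to a
monoid homomorphism, and the action components are continuous extensions of the
monoid multiplications, then `f ∘ λ_m = λ'_{f(m)} ∘ f` and `f ∘ ρ_m = ρ'_{f(m)} ∘ f`. -/
theorem stmt0 {X Y : Type*} [TopologicalSpace X] [TopologicalSpace Y] [T2Space Y]
    (M : Set X) (hM : Dense M) [Monoid M]
    (lam rho : M → X → X)
    (hlam_cont : ∀ m : M, Continuous (lam m))
    (hrho_cont : ∀ m : M, Continuous (rho m))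
    (hlam : ∀ m m' : M, lam m (m' : X) = ((m * m' : M) : X))
    (hrho : ∀ m m' : M, rho m (m' : X) = ((m' * m : M) : X))
    (N : Set Y) (hN : Dense N) [Monoid N]
    (lam' rho' : N → Y → Y)
    (hlam'_cont : ∀ n : N, Continuous (lam' n))
    (hrho'_cont : ∀ n : N, Continuous (rho' n))
    (hlam' : ∀ n n' : N, lam' n (n' : Y) = ((n * n' : N) : Y))
    (hrho' : ∀ n n' : N, rho' n (n' : Y) = ((n' * n : N) : Y))
    (f : X → Y) (hf : Continuous f)
    (F : M →* N) (hF : ∀ m : M, (F m : Y) = f (m : X)) :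
    ∀ m : M, f ∘ lam m = lam' (F m) ∘ f ∧ f ∘ rho m = rho' (F m) ∘ f := by
  intro m
  have key : ∀ (g h : X → Y), Continuous g → Continuous h →
      (∀ m' : M, g (m' : X) = h (m' : X)) → g = h := by
    intro g h hg hh hagree
    apply Continuous.ext_on hM hg hh
    intro x hx
    exact hagree ⟨x, hx⟩
  constructor
  · apply key _ _ (hf.comp (hlam_cont m)) ((hlam'_cont (F m)).comp hf)
    intro m'
    simp only [Function.comp_apply, hlam m m', ← hF, hlam', map_mul]
  · apply key _ _ (hf.comp (hrho_cont m)) ((hrho'_cont (F m)).comp hf)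
    intro m'
    simp only [Function.comp_apply, hrho m m', ← hF, hrho', map_mul]
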